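/- Let n ≥ 1 and let u : Fin n → Fin n → ℝ → ℝ be functions each differentiable on ℝ. For q : Fin n → ℝ define the Stäckel matrix M(q) ∈ Matrix (Fin n) (Fin n) ℝ by M(q) i j = u i j (q i) (the i-th row depends only on q i). For (q, p) ∈ (Fin n → ℝ) × (Fin n → ℝ) with M(q) invertible, define α_j (q, p) = (1/2) * ∑ k, (M(q)⁻¹) j k * (p k)^2 for each j : Fin n. Then the functions α_j pairwise Poisson-commute: for all j, l : Fin n and every (q, p) with det M(q) ≠ 0, ∑ i, ((∂α_j/∂p_i)(∂α_l/∂q_i) - (∂α_j/∂q_i)(∂α_l/∂p_i)) = 0 at (q, p), where each partial derivative is the derivative of the corresponding one-variable slice. -/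

import Mathlib

/-- The Stäckel matrix associated with functions `u i j : ℝ → ℝ`: its `i`-th row depends only
on the `i`-th coordinate `q i`. -/
def staeckelMatrix (n : ℕ) (u : Fin n → Fin n → ℝ → ℝ) (q : Fin n → ℝ) :
    Matrix (Fin n) (Fin n) ℝ :=
  fun i j => u i j (q i)

/-- The Stäckel first integrals `α_j (q, p) = (1/2) ∑ k (M(q)⁻¹)_{j k} p_k²`. -/
noncomputable def staeckelAlpha (n : ℕ) (u : Fin n → Fin n → ℝ → ℝ) (j : Fin n)
    (q p : Fin n → ℝ) : ℝ :=
  (1 / 2) * ∑ k, (staeckelMatrix n u q)⁻¹ j k * (p k) ^ 2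

open Matrix Finset Filter

private lemma det_diffAt {n : ℕ} {A : ℝ → Matrix (Fin n) (Fin n) ℝ} {t₀ : ℝ}
    (h : ∀ a b, DifferentiableAt ℝ (fun t => A t a b) t₀) :
    DifferentiableAt ℝ (fun t => (A t).det) t₀ := by
  simp only [Matrix.det_apply']
  exact DifferentiableAt.fun_sum fun σ _ =>
    (DifferentiableAt.fun_finsetProd (fun b _ => h (σ b) b)).const_mul _

private lemma inv_entry_diffAt {n : ℕ} {A : ℝ → Matrix (Fin n) (Fin n) ℝ} {t₀ : ℝ}
    (h : ∀ a b, DifferentiableAt ℝ (fun t => A t a b) t₀)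
    (hdet : (A t₀).det ≠ 0) (c k : Fin n) :
    DifferentiableAt ℝ (fun t => (A t)⁻¹ c k) t₀ := by
  have hadj : DifferentiableAt ℝ (fun t => (A t).adjugate c k) t₀ := by
    simp only [Matrix.adjugate_apply]
    apply det_diffAt
    intro a b
    rcases eq_or_ne a k with ha | ha
    · simp only [Matrix.updateRow_apply, ha, if_pos rfl]
      exact differentiableAt_const _
    · simp only [Matrix.updateRow_apply, ha, if_neg ha]
      exact h a b
  have hd : DifferentiableAt ℝ (fun t => ((A t).det)⁻¹ * (A t).adjugate c k) t₀ :=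
    ((det_diffAt h).inv hdet).mul hadj
  refine hd.congr_of_eventuallyEq (Filter.Eventually.of_forall fun t => ?_)
  show (A t)⁻¹ c k = (A t).det⁻¹ * (A t).adjugate c k
  rw [Matrix.inv_def, Matrix.smul_apply, Ring.inverse_eq_inv, smul_eq_mul]

/-- Derivative of `α_j` in `p i`. -/
private lemma pderiv_eq {n : ℕ} (u : Fin n → Fin n → ℝ → ℝ) (q p : Fin n → ℝ)
    (i j : Fin n) :
    deriv (fun t => staeckelAlpha n u j q (Function.update p i t)) (p i)
      = (staeckelMatrix n u q)⁻¹ j i * p i := by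
  set W := (staeckelMatrix n u q)⁻¹ with hW
  have h : HasDerivAt (fun t => staeckelAlpha n u j q (Function.update p i t))
      (W j i * p i) (p i) := by
    have hsum : HasDerivAt (fun t => ∑ k, W j k * (Function.update p i t k) ^ 2)
        (∑ k, (if k = i then W j i * (2 * p i) else 0)) (p i) := by
      apply HasDerivAt.fun_sum
      intro k _
      rcases eq_or_ne k i with hk | hk
      · subst hk
        have hfun : (fun t => W j k * (Function.update p k t k) ^ 2)
            = fun t => W j k * t ^ 2 := by
          funext t; simp
        rw [hfun]
        simpa using ((hasDerivAt_pow 2 (p k)).const_mul (W j k))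
      · have hfun : (fun t => W j k * (Function.update p i t k) ^ 2)
            = fun _ => W j k * (p k) ^ 2 := by
          funext t; simp [Function.update_apply, hk]
        rw [hfun]
        simpa [hk] using hasDerivAt_const (p i) (W j k * (p k) ^ 2)
    have hsum' := hsum.const_mul (1 / 2 : ℝ)
    have : (1 / 2 : ℝ) * ∑ k, (if k = i then W j i * (2 * p i) else 0) = W j i * p i := by
      simp [Finset.sum_ite_eq' Finset.univ i]
      ring
    rw [this] at hsum'
    exact hsum'
  exact h.deriv

/-- Derivative of `α_j` in `q i` has the form `W j i * C` with `C` independent of `j`. -/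
private lemma qderiv_eq {n : ℕ} (u : Fin n → Fin n → ℝ → ℝ)
    (hu : ∀ i j, Differentiable ℝ (u i j)) (q p : Fin n → ℝ)
    (hdet : (staeckelMatrix n u q).det ≠ 0) (i : Fin n) :
    ∃ C : ℝ, ∀ j, deriv (fun t => staeckelAlpha n u j (Function.update q i t) p) (q i)
      = (staeckelMatrix n u q)⁻¹ j i * C := by
  classical
  set M := staeckelMatrix n u q with hM
  set W := M⁻¹ with hW
  set t₀ := q i with ht₀
  set f : ℝ → Matrix (Fin n) (Fin n) ℝ := fun t => staeckelMatrix n u (Function.update q i t)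
    with hf
  have hf0 : f t₀ = M := by
    simp [hf, ht₀, Function.update_eq_self, hM]
  set D : Matrix (Fin n) (Fin n) ℝ := fun a b => if a = i then deriv (u i b) t₀ else 0 with hD
  have hfd : ∀ a b, HasDerivAt (fun t => f t a b) (D a b) t₀ := by
    intro a b
    rcases eq_or_ne a i with ha | ha
    · subst ha
      have hfun : (fun t => f t a b) = u a b := by
        funext t; simp [hf, staeckelMatrix]
      rw [hfun]
      simpa [hD] using ((hu a b) t₀).hasDerivAt
    · have hfun : (fun t => f t a b) = fun _ => u a b (q a) := by
        funext t; simp [hf, staeckelMatrix, Function.update_apply, ha]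
      rw [hfun]
      simpa [hD, ha] using hasDerivAt_const t₀ (u a b (q a))
  have hdet0 : (f t₀).det ≠ 0 := by rw [hf0]; exact hdet
  set g : ℝ → Matrix (Fin n) (Fin n) ℝ := fun t => (f t)⁻¹ with hg
  have hgd : ∀ c k, HasDerivAt (fun t => g t c k) (deriv (fun t => g t c k) t₀) t₀ :=
    fun c k => (inv_entry_diffAt (fun a b => (hfd a b).differentiableAt) hdet0 c k).hasDerivAt
  set G : Matrix (Fin n) (Fin n) ℝ := fun c k => deriv (fun t => g t c k) t₀ with hG
  -- eventual identity f t * g t = 1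
  have hcont : ContinuousAt (fun t => (f t).det) t₀ :=
    (det_diffAt (fun a b => (hfd a b).differentiableAt)).continuousAt
  have hev : ∀ᶠ t in nhds t₀, (f t).det ≠ 0 := hcont.eventually_ne hdet0
  -- entrywise derivative of the product identity
  have hMG : M * G = -(D * W) := by
    ext j k
    have hone : (fun t => ∑ c, f t j c * g t c k) =ᶠ[nhds t₀]
        (fun _ => (1 : Matrix (Fin n) (Fin n) ℝ) j k) := by
      filter_upwards [hev] with t ht
      have := Matrix.mul_nonsing_inv (f t) (isUnit_iff_ne_zero.2 ht)
      calc ∑ c, f t j c * g t c k = (f t * g t) j k := (Matrix.mul_apply).symm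
        _ = (1 : Matrix (Fin n) (Fin n) ℝ) j k := by rw [this]
    have hprod : HasDerivAt (fun t => ∑ c, f t j c * g t c k)
        (∑ c, (D j c * g t₀ c k + f t₀ j c * G c k)) t₀ :=
      HasDerivAt.fun_sum fun c _ => (hfd j c).mul (hgd c k)
    have hzero : HasDerivAt (fun t => ∑ c, f t j c * g t c k) 0 t₀ :=
      (hasDerivAt_const t₀ ((1 : Matrix (Fin n) (Fin n) ℝ) j k)).congr_of_eventuallyEq hone
    have hsum0 : ∑ c, (D j c * g t₀ c k + f t₀ j c * G c k) = 0 := hprod.unique hzero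
    have hgt0 : g t₀ = W := by show (f t₀)⁻¹ = W; rw [hf0]
    rw [hgt0, hf0] at hsum0
    rw [Finset.sum_add_distrib] at hsum0
    have : ∑ c, M j c * G c k = -∑ c, D j c * W c k := by linarith
    simp only [Matrix.mul_apply, Matrix.neg_apply]
    exact this
  have hG_eq : G = -(W * (D * W)) := by
    have h1 : W * M = 1 := Matrix.nonsing_inv_mul M (isUnit_iff_ne_zero.2 hdet)
    calc G = (W * M) * G := by rw [h1, Matrix.one_mul]
      _ = W * (M * G) := Matrix.mul_assoc _ _ _
      _ = W * -(D * W) := by rw [hMG]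
      _ = -(W * (D * W)) := by rw [Matrix.mul_neg]
  have hGjk : ∀ j k, G j k = -(W j i * (D * W) i k) := by
    intro j k
    rw [hG_eq]
    simp only [Matrix.neg_apply, Matrix.mul_apply]
    congr 1
    rw [Finset.sum_eq_single i]
    · intro b _ hb
      have h0 : ∑ c, D b c * W c k = 0 :=
        Finset.sum_eq_zero fun c _ => by simp [hD, hb]
      rw [h0, mul_zero]
    · intro h; exact absurd (Finset.mem_univ i) h
  refine ⟨(1 / 2) * ∑ k, -((D * W) i k) * p k ^ 2, ?_⟩
  intro j
  have hα : HasDerivAt (fun t => staeckelAlpha n u j (Function.update q i t) p)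
      ((1 / 2) * ∑ k, G j k * p k ^ 2) t₀ := by
    have : (fun t => staeckelAlpha n u j (Function.update q i t) p)
        = fun t => (1 / 2) * ∑ k, g t j k * p k ^ 2 := rfl
    rw [this]
    exact (HasDerivAt.fun_sum fun k _ => (hgd j k).mul_const (p k ^ 2)).const_mul _
  rw [hα.deriv]
  rw [Finset.sum_congr rfl fun k _ => by rw [hGjk j k]]
  rw [Finset.mul_sum, Finset.mul_sum]
  rw [Finset.mul_sum]
  apply Finset.sum_congr rfl
  intro k _
  ring

/-- **Stäckel's theorem** (commutation of the integrals): the functions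
`α_j (q, p) = (1/2) ∑ k (M(q)⁻¹)_{j k} p_k²` pairwise Poisson-commute at every point where
`M(q)` is invertible. -/
theorem staeckel_integrals_commute (n : ℕ) (hn : 1 ≤ n) (u : Fin n → Fin n → ℝ → ℝ)
    (hu : ∀ i j, Differentiable ℝ (u i j))
    (j l : Fin n) (q p : Fin n → ℝ) (hdet : (staeckelMatrix n u q).det ≠ 0) :
    ∑ i, (deriv (fun t => staeckelAlpha n u j q (Function.update p i t)) (p i) *
          deriv (fun t => staeckelAlpha n u l (Function.update q i t) p) (q i)
        - deriv (fun t => staeckelAlpha n u j (Function.update q i t) p) (q i) *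
          deriv (fun t => staeckelAlpha n u l q (Function.update p i t)) (p i)) = 0 := by
  apply Finset.sum_eq_zero
  intro i _
  obtain ⟨C, hC⟩ := qderiv_eq u hu q p hdet i
  rw [hC j, hC l, pderiv_eq u q p i j, pderiv_eq u q p i l]
  ring
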